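/- Let β, c be real parameters. For every natural number n and every real x ≠ 0, the generalized Dunkl operator 𝔇 acts on the basis function Φ_n by (𝔇 Φ_n)(x) = ν_n Φ_{n−1}(x) (with the convention Φ_{−1} = 0), where ν_n = (1−c)n if n is even and ν_n = (c+1)(β+n) if n is odd. -/

import Mathlib

noncomputable section

/-- The generalized Dunkl operator `𝔇`: acts on `f` at `x ≠ 0` by
`A(x)(f(x) - f(-x)) + B(x) f'(x) - C(x) f'(-x)` (the last term being `C(x)` times
minus the value at `x` of the derivative of the reflection `t ↦ f (-t)`). -/
noncomputable def Dop (β c : ℝ) (f : ℝ → ℝ) (x : ℝ) : ℝ :=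
  (c ^ 2 / x ^ 3 - c * (c - 1) / (2 * x ^ 2) + β * (c + 1) / (2 * x)) * (f x - f (-x))
    + ((x ^ 2 - c ^ 2) / x ^ 2) * deriv f x
    - (c * (x + c) * (1 - x) / x ^ 2) * deriv f (-x)

/-- The canonical polynomial basis `Φ_n`. -/
noncomputable def Phi (c : ℝ) (n : ℕ) (x : ℝ) : ℝ :=
  if Even n then (x ^ 2 - c ^ 2) ^ (n / 2)
  else (x + c) * (x ^ 2 - c ^ 2) ^ ((n - 1) / 2)

lemma hd_even (c : ℝ) (m : ℕ) (x : ℝ) :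
    HasDerivAt (fun x : ℝ => (x ^ 2 - c ^ 2) ^ m)
      ((m : ℝ) * (x ^ 2 - c ^ 2) ^ (m - 1) * (2 * x)) x := by
  have h : HasDerivAt (fun x : ℝ => x ^ 2 - c ^ 2) (2 * x) x := by
    simpa using (hasDerivAt_pow 2 x).sub_const (c ^ 2)
  exact h.pow m

lemma hd_odd (c : ℝ) (m : ℕ) (x : ℝ) :
    HasDerivAt (fun x : ℝ => (x + c) * (x ^ 2 - c ^ 2) ^ m)
      ((x ^ 2 - c ^ 2) ^ m + (x + c) * ((m : ℝ) * (x ^ 2 - c ^ 2) ^ (m - 1) * (2 * x))) x := by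
  have h1 : HasDerivAt (fun x : ℝ => x + c) 1 x := (hasDerivAt_id x).add_const c
  exact (h1.mul (hd_even c m x)).congr_deriv (by ring)

/-- The generalized Dunkl operator acts on the canonical basis by
`𝔇 Φ_n = ν_n Φ_{n-1}` (with the convention `Φ_{-1} = 0`, automatic here since
`ν_0 = 0`), where `ν_n = (1-c)n` for even `n` and `ν_n = (c+1)(β+n)` for odd `n`. -/
theorem D_on_Phi (β c : ℝ) (n : ℕ) (x : ℝ) (hx : x ≠ 0) :
    Dop β c (Phi c n) x =
      (if Even n then (1 - c) * (n : ℝ) else (c + 1) * (β + n)) * Phi c (n - 1) x := by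
  rcases Nat.even_or_odd n with ⟨m, hm⟩ | ⟨m, hm⟩
  · -- n = m + m = 2m
    subst hm
    have hE : Even (m + m) := ⟨m, rfl⟩
    have hP : Phi c (m + m) = fun x : ℝ => (x ^ 2 - c ^ 2) ^ m := by
      funext y
      have : (m + m) / 2 = m := by omega
      simp [Phi, hE, this]
    rw [hP]
    rw [if_pos hE]
    rcases Nat.eq_zero_or_pos m with rfl | hm1
    · simp [Dop]
    · have hN : ¬ Even (m + m - 1) := by
        simp only [Nat.even_iff]; omega
      rw [Phi, if_neg hN]
      have h2 : (m + m - 1 - 1) / 2 = m - 1 := by omega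
      rw [h2]
      rw [Dop, (hd_even c m x).deriv, (hd_even c m (-x)).deriv]
      obtain ⟨k, rfl⟩ := Nat.exists_eq_add_of_le hm1
      have hks : 1 + k - 1 = k := by omega
      rw [hks]
      simp only [neg_sq, pow_succ]
      push_cast
      field_simp
      ring
  · subst hm
    have hE : ¬ Even (2 * m + 1) := by simp [Nat.even_add_one, parity_simps]
    have hP : Phi c (2 * m + 1) = fun x : ℝ => (x + c) * (x ^ 2 - c ^ 2) ^ m := by
      funext y; simp [Phi, hE]
    have hE2 : Even (2 * m + 1 - 1) := by simpa using even_two_mul m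
    rw [hP, if_neg hE, Phi, if_pos hE2]
    have h2 : (2 * m + 1 - 1) / 2 = m := by omega
    rw [h2]
    rw [Dop, (hd_odd c m x).deriv, (hd_odd c m (-x)).deriv]
    rcases Nat.eq_zero_or_pos m with rfl | hm1
    · push_cast
      simp only [neg_sq, pow_zero]
      field_simp
      ring
    · obtain ⟨k, rfl⟩ := Nat.exists_eq_add_of_le hm1
      have hks : 1 + k - 1 = k := by omega
      rw [hks]
      simp only [neg_sq, pow_succ]
      push_cast
      field_simp
      ring
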